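/- There is a bijection between Dyck paths of length 2n and non-crossing out-trees on n+1 vertices; consequently the number of non-crossing trees on [n+1] in which every vertex other than the root 1 has in-degree exactly 1 equals the Catalan number C_n. -/

import Mathlib

open Finset PowerSeries

/-- A Dyck word: list of booleans (`true` = up-step, `false` = down-step),
with equally many up- and down-steps, never going below the x-axis. -/
def IsDyckWord (p : List Bool) : Prop :=
  (∀ k, (p.take k).count false ≤ (p.take k).count true) ∧
    p.count true = p.count false

/-- The lengths of the maximal runs of up-steps (ascents) of a path, in order. -/
def ascentLengths (p : List Bool) : List ℕ :=
  ((p.splitOn false).map List.length).filter (fun k => 0 < k)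

/-- Dyck paths of semilength `n` together with a colour for each ascent,
where a `k`-ascent may receive any colour `c` with `L k c`. -/
def ColouredDyck {α : Type*} (n : ℕ) (L : ℕ → α → Prop) :
    Set (List Bool × List α) :=
  {pc | IsDyckWord pc.1 ∧ pc.1.length = 2 * n ∧
    pc.2.length = (ascentLengths pc.1).length ∧
    ∀ q ∈ (ascentLengths pc.1).zip pc.2, L q.1 q.2}

/-- A non-crossing tree on vertices `0, 1, …, N-1` placed clockwise on a circle:
a tree whose edges, as chords, are pairwise non-crossing, i.e. there is no
alternating pattern `a < c < b < d` with `ab` and `cd` edges. -/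
def IsNCTree {N : ℕ} (G : SimpleGraph (Fin N)) : Prop :=
  G.IsTree ∧ ∀ a b c d : Fin N, G.Adj a b → G.Adj c d →
    ¬(a < c ∧ c < b ∧ b < d)

/-- A non-crossing out-tree: a non-crossing tree in which every vertex other
than the root `0` has exactly one in-edge (edge coming from a smaller vertex). -/
def IsNCOTree {N : ℕ} (G : SimpleGraph (Fin N)) : Prop :=
  IsNCTree G ∧ ∀ v : Fin N, v.val ≠ 0 → ∃! a : Fin N, a < v ∧ G.Adj a v

namespace NCOProof



/-- Non-crossing parent sequences: `q i` is the parent of vertex `i+1`. -/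
def NC (n : ℕ) (q : Fin n → ℕ) : Prop :=
  (∀ i : Fin n, q i ≤ (i : ℕ)) ∧
    ∀ i j : Fin n, i < j → q j ≤ q i ∨ (i : ℕ) < q j

def PSeq (n : ℕ) := {q : Fin n → ℕ // NC n q}

instance fin_pseq (n : ℕ) : Finite (PSeq n) := by
  have : Function.Injective (fun q : PSeq n => (fun i => (⟨q.1 i, Nat.lt_succ_of_le (q.2.1 i)⟩ : Fin (i + 1)) : ∀ i : Fin n, Fin (i + 1))) := by
    intro q q' h
    apply Subtype.ext; funext i
    exact congrArg Fin.val (congrFun h i)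
  exact Finite.of_injective _ this

/-- Glue two parent sequences with a new zero at position `k`. -/
def glue {n : ℕ} (k : Fin (n + 1)) (a : Fin (k : ℕ) → ℕ) (b : Fin (n - (k : ℕ)) → ℕ) :
    Fin (n + 1) → ℕ := fun i =>
  if h : (i : ℕ) < (k : ℕ) then a ⟨i, h⟩
  else if h2 : (i : ℕ) = (k : ℕ) then 0
  else b ⟨(i : ℕ) - ((k : ℕ) + 1), by have := i.isLt; have := k.isLt; omega⟩ + ((k : ℕ) + 1)

lemma glue_lt {n : ℕ} (k : Fin (n + 1)) (a : Fin (k : ℕ) → ℕ) (b : Fin (n - (k : ℕ)) → ℕ)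
    (i : Fin (n + 1)) (h : (k : ℕ) < (i : ℕ)) :
    glue k a b i = b ⟨(i : ℕ) - ((k : ℕ) + 1), by have := i.isLt; omega⟩ + ((k : ℕ) + 1) := by
  unfold glue
  rw [dif_neg (by omega), dif_neg (by omega)]

lemma glue_nc {n : ℕ} (k : Fin (n + 1)) (a : Fin (k : ℕ) → ℕ) (b : Fin (n - (k : ℕ)) → ℕ)
    (ha : NC _ a) (hb : NC _ b) : NC (n + 1) (glue k a b) := by
  constructor
  · intro i
    unfold glue
    split_ifs with h1 h2
    · exact ha.1 ⟨i, h1⟩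
    · omega
    · have := hb.1 ⟨(i : ℕ) - ((k : ℕ) + 1), by have := i.isLt; omega⟩
      simp only at this ⊢
      omega
  · intro i j hij
    have hij' : (i : ℕ) < (j : ℕ) := hij
    unfold glue
    rcases lt_trichotomy (j : ℕ) (k : ℕ) with hj | hj | hj
    · rw [dif_pos hj, dif_pos (by omega)]
      exact ha.2 ⟨i, by omega⟩ ⟨j, hj⟩ hij'
    · rw [dif_neg (by omega), dif_pos (by omega), dif_pos (by omega)]
      left
      exact Nat.zero_le _
    · rw [dif_neg (by omega), dif_neg (by omega)]
      rcases lt_trichotomy (i : ℕ) (k : ℕ) with hi | hi | hi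
      · rw [dif_pos hi]; right; omega
      · rw [dif_neg (by omega), dif_pos hi]; right; omega
      · rw [dif_neg (by omega), dif_neg (by omega)]
        have := hb.2 ⟨(i : ℕ) - ((k : ℕ) + 1), by have := i.isLt; omega⟩
          ⟨(j : ℕ) - ((k : ℕ) + 1), by have := j.isLt; omega⟩ (by exact Fin.mk_lt_mk.mpr (by omega))
        rcases this with h | h
        · left; omega
        · right; simp only at h; omega

def decompB (n : ℕ) : (Σ k : Fin (n + 1), PSeq (k : ℕ) × PSeq (n - (k : ℕ))) → PSeq (n + 1) :=
  fun x => ⟨glue x.1 x.2.1.1 x.2.2.1, glue_nc _ _ _ x.2.1.2 x.2.2.2⟩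

lemma decompB_bij (n : ℕ) : Function.Bijective (decompB n) := by
  constructor
  · rintro ⟨k, ⟨a, ha⟩, ⟨b, hb⟩⟩ ⟨k', ⟨a', ha'⟩, ⟨b', hb'⟩⟩ h
    have hfun : glue k a b = glue k' a' b' := congrArg Subtype.val h
    -- first components agree
    have hkk : (k : ℕ) = (k' : ℕ) := by
      by_contra hne
      rcases Nat.lt_or_ge (k : ℕ) (k' : ℕ) with hlt | hge
      · have h1 := congrFun hfun k'
        rw [glue_lt k a b k' hlt] at h1
        unfold glue at h1
        rw [dif_neg (by omega), dif_pos rfl] at h1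
        omega
      · have hlt : (k' : ℕ) < (k : ℕ) := by omega
        have h1 := congrFun hfun k
        rw [glue_lt k' a' b' k hlt] at h1
        unfold glue at h1
        rw [dif_neg (by omega), dif_pos rfl] at h1
        omega
    obtain rfl : k = k' := Fin.ext hkk
    have haa : a = a' := by
      funext i
      have h1 := congrFun hfun ⟨(i : ℕ), by have := i.isLt; have := k.isLt; omega⟩
      unfold glue at h1
      rw [dif_pos (by exact i.isLt), dif_pos (by exact i.isLt)] at h1
      simpa using h1
    have hbb : b = b' := by
      funext j
      have hj : (k : ℕ) + 1 + (j : ℕ) < n + 1 := by have := j.isLt; omega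
      have h1 := congrFun hfun ⟨(k : ℕ) + 1 + (j : ℕ), hj⟩
      rw [glue_lt k a b _ (by simp; omega), glue_lt k a' b' _ (by simp; omega)] at h1
      have hidx : ((⟨(k : ℕ) + 1 + (j : ℕ), hj⟩ : Fin (n + 1)) : ℕ) - ((k : ℕ) + 1) = (j : ℕ) := by
        simp
      simp only [hidx] at h1
      have : b ⟨(j : ℕ), j.isLt⟩ = b' ⟨(j : ℕ), j.isLt⟩ := by omega
      simpa using this
    subst haa; subst hbb; rfl
  · rintro ⟨q, hq⟩
    classical
    have h0mem : (⟨0, Nat.succ_pos n⟩ : Fin (n + 1)) ∈ Finset.univ.filter (fun i => q i = 0) := by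
      simp only [Finset.mem_filter, Finset.mem_univ, true_and]
      have := hq.1 ⟨0, Nat.succ_pos n⟩
      simpa using Nat.le_zero.mp this
    set S := Finset.univ.filter (fun i : Fin (n + 1) => q i = 0) with hS
    have hSne : S.Nonempty := ⟨_, h0mem⟩
    set k := S.max' hSne with hk
    have hqk : q k = 0 := by
      have := S.max'_mem hSne
      simp only [hS, Finset.mem_filter] at this
      exact this.2
    have hgt : ∀ i : Fin (n + 1), (k : ℕ) < (i : ℕ) → (k : ℕ) < q i := by
      intro i hi
      rcases hq.2 k i (by exact hi) with h | h
      · exfalso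
        have hqi : q i = 0 := by omega
        have : i ∈ S := by simp [hS, hqi]
        have := S.le_max' i this
        rw [← hk] at this
        have : (i : ℕ) ≤ (k : ℕ) := this
        omega
      · exact h
    refine ⟨⟨k, ⟨fun i => q ⟨i, by have := i.isLt; have := k.isLt; omega⟩, ?_⟩,
      ⟨fun j => q ⟨(k : ℕ) + 1 + (j : ℕ), by have := j.isLt; omega⟩ - ((k : ℕ) + 1), ?_⟩⟩, ?_⟩
    · constructor
      · intro i; exact hq.1 ⟨i, by have := i.isLt; have := k.isLt; omega⟩
      · intro i j hij
        have := hq.2 ⟨i, by have := i.isLt; have := k.isLt; omega⟩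
          ⟨j, by have := j.isLt; have := k.isLt; omega⟩ hij
        exact this
    · constructor
      · intro j
        have h1 := hq.1 ⟨(k : ℕ) + 1 + (j : ℕ), by have := j.isLt; omega⟩
        simp only at h1 ⊢
        omega
      · intro i j hij
        have hij' : (i : ℕ) < (j : ℕ) := hij
        have h1 := hq.2 ⟨(k : ℕ) + 1 + (i : ℕ), by have := i.isLt; omega⟩
          ⟨(k : ℕ) + 1 + (j : ℕ), by have := j.isLt; omega⟩ (by exact Fin.mk_lt_mk.mpr (by omega))
        have h2 := hgt ⟨(k : ℕ) + 1 + (i : ℕ), by have := i.isLt; omega⟩ (by simp; omega)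
        have h3 := hgt ⟨(k : ℕ) + 1 + (j : ℕ), by have := j.isLt; omega⟩ (by simp; omega)
        simp only at h1 h2 h3 ⊢
        omega
    · apply Subtype.ext
      funext i
      show glue k _ _ i = q i
      unfold glue
      split_ifs with h1 h2
      · simp
      · rw [show i = k from Fin.ext h2, hqk]
      · have hgtk : (k : ℕ) < (i : ℕ) := by omega
        have h2 := hgt i hgtk
        simp only
        have hidx : ((k : ℕ) + 1 + ((i : ℕ) - ((k : ℕ) + 1))) = (i : ℕ) := by omega
        have : q ⟨(k : ℕ) + 1 + ((i : ℕ) - ((k : ℕ) + 1)), by have := i.isLt; omega⟩ = q i := by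
          congr 1
          exact Fin.ext hidx
        omega

lemma card_pseq : ∀ n : ℕ, Nat.card (PSeq n) = catalan n := by
  intro n
  induction n using Nat.strong_induction_on with
  | _ n ih =>
    match n with
    | 0 =>
      rw [catalan_zero]
      have : Unique (PSeq 0) := by
        refine ⟨⟨⟨fun i => i.elim0, ⟨fun i => i.elim0, fun i => i.elim0⟩⟩⟩, ?_⟩
        rintro ⟨q, hq⟩
        apply Subtype.ext; funext i; exact i.elim0
      exact Nat.card_unique
    | n + 1 =>
      have e := Equiv.ofBijective _ (decompB_bij n)
      rw [← Nat.card_congr e]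
      have : ∀ k : Fin (n + 1), Fintype (PSeq (k : ℕ) × PSeq (n - (k : ℕ))) := fun k =>
        Fintype.ofFinite _
      rw [Nat.card_eq_fintype_card, Fintype.card_sigma, catalan_succ]
      apply Finset.sum_congr rfl
      intro k _
      rw [← Nat.card_eq_fintype_card, Nat.card_prod,
        ih _ (by have := k.isLt; omega), ih _ (by have := k.isLt; omega)]

section Graph

variable {n : ℕ}

def graphOf (q : Fin n → ℕ) : SimpleGraph (Fin (n + 1)) :=
  SimpleGraph.fromRel (fun a b => ∃ i : Fin n, (a : ℕ) = q i ∧ (b : ℕ) = (i : ℕ) + 1)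

lemma adj_iff {q : Fin n → ℕ} (hq : NC n q) {a b : Fin (n + 1)} (hab : a < b) :
    (graphOf q).Adj a b ↔ ∃ i : Fin n, (a : ℕ) = q i ∧ (b : ℕ) = (i : ℕ) + 1 := by
  rw [graphOf, SimpleGraph.fromRel_adj]
  constructor
  · rintro ⟨-, h | ⟨i, h1, h2⟩⟩
    · exact h
    · exfalso
      have := hq.1 i
      have hab' : (a : ℕ) < (b : ℕ) := hab
      omega
  · intro h
    exact ⟨Fin.ne_of_lt hab, Or.inl h⟩

/-- The parent of a nonzero vertex. -/
def par (q : Fin n → ℕ) (hq : NC n q) (v : Fin (n + 1)) (hv : (v : ℕ) ≠ 0) : Fin (n + 1) :=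
  ⟨q ⟨(v : ℕ) - 1, by have := v.isLt; omega⟩,
    by have := hq.1 ⟨(v : ℕ) - 1, by have := v.isLt; omega⟩; have := v.isLt; simp at this ⊢; omega⟩

lemma par_lt {q : Fin n → ℕ} (hq : NC n q) (v : Fin (n + 1)) (hv : (v : ℕ) ≠ 0) :
    par q hq v hv < v := by
  have := hq.1 ⟨(v : ℕ) - 1, by have := v.isLt; omega⟩
  simp only [Fin.lt_def, par] at this ⊢
  omega

lemma par_adj {q : Fin n → ℕ} (hq : NC n q) (v : Fin (n + 1)) (hv : (v : ℕ) ≠ 0) :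
    (graphOf q).Adj (par q hq v hv) v := by
  rw [adj_iff hq (par_lt hq v hv)]
  exact ⟨⟨(v : ℕ) - 1, by have := v.isLt; omega⟩, rfl, by have := v.isLt; simp; omega⟩

lemma exuniq {q : Fin n → ℕ} (hq : NC n q) (v : Fin (n + 1)) (hv : (v : ℕ) ≠ 0) :
    ∃! a : Fin (n + 1), a < v ∧ (graphOf q).Adj a v := by
  refine ⟨par q hq v hv, ⟨par_lt hq v hv, par_adj hq v hv⟩, ?_⟩
  rintro a ⟨hav, hadj⟩
  rw [adj_iff hq hav] at hadj
  obtain ⟨i, h1, h2⟩ := hadj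
  apply Fin.ext
  show (a : ℕ) = q ⟨(v : ℕ) - 1, _⟩
  have : i = ⟨(v : ℕ) - 1, by have := v.isLt; omega⟩ := Fin.ext (by simp; omega)
  rw [h1, this]

lemma noncross {q : Fin n → ℕ} (hq : NC n q) :
    ∀ a b c d : Fin (n + 1), (graphOf q).Adj a b → (graphOf q).Adj c d →
      ¬(a < c ∧ c < b ∧ b < d) := by
  rintro a b c d hab hcd ⟨h1, h2, h3⟩
  have hab' : a < b := h1.trans h2
  have hcd' : c < d := h2.trans h3
  rw [adj_iff hq hab'] at hab
  rw [adj_iff hq hcd'] at hcd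
  obtain ⟨i, hi1, hi2⟩ := hab
  obtain ⟨j, hj1, hj2⟩ := hcd
  have hij : i < j := by
    have : (b : ℕ) < (d : ℕ) := h3
    rw [Fin.lt_def]; omega
  have h1' : (a : ℕ) < (c : ℕ) := h1
  have h2' : (c : ℕ) < (b : ℕ) := h2
  rcases hq.2 i j hij with h | h <;> omega

lemma reach_zero {q : Fin n → ℕ} (hq : NC n q) :
    ∀ (vv : ℕ) (hvv : vv < n + 1), (graphOf q).Reachable ⟨vv, hvv⟩ ⟨0, Nat.succ_pos n⟩ := by
  intro vv
  induction vv using Nat.strong_induction_on with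
  | _ vv ih =>
    intro hvv
    by_cases hv : vv = 0
    · subst hv; exact SimpleGraph.Reachable.refl _
    · have hpl : ((par q hq ⟨vv, hvv⟩ hv) : ℕ) < vv := par_lt hq ⟨vv, hvv⟩ hv
      exact ((par_adj hq ⟨vv, hvv⟩ hv).symm.reachable).trans
        (ih _ hpl (par q hq ⟨vv, hvv⟩ hv).isLt)

lemma connected {q : Fin n → ℕ} (hq : NC n q) : (graphOf q).Connected := by
  rw [SimpleGraph.connected_iff]
  refine ⟨fun u v => ?_, ⟨⟨0, Nat.succ_pos n⟩⟩⟩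
  have h1 := reach_zero hq (u : ℕ) u.isLt
  have h2 := reach_zero hq (v : ℕ) v.isLt
  exact h1.trans h2.symm

lemma support_getElem {V : Type*} {G : SimpleGraph V} {u v : V} (p : G.Walk u v) :
    ∀ (i : ℕ) (h : i < p.support.length), p.support[i] = p.getVert i := by
  induction p with
  | nil => intro i h; simp [SimpleGraph.Walk.support_nil] at h; subst h; rfl
  | cons hadj p ih =>
    rintro (_ | i) h
    · rfl
    · have h' : i < p.support.length := by
        have h1 := SimpleGraph.Walk.length_support p
        have h2 := SimpleGraph.Walk.length_support (SimpleGraph.Walk.cons hadj p)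
        have h3 : (SimpleGraph.Walk.cons hadj p).length = p.length + 1 :=
          SimpleGraph.Walk.length_cons _ _
        omega
      simp only [SimpleGraph.Walk.support_cons, List.getElem_cons_succ,
        SimpleGraph.Walk.getVert_cons_succ]
      exact ih i h'

set_option maxHeartbeats 2000000 in
lemma acyclic {q : Fin n → ℕ} (hq : NC n q) : (graphOf q).IsAcyclic := by
  intro v c hc
  classical
  have hne : c.support.toFinset.Nonempty := by
    simp [List.toFinset_nonempty_iff, SimpleGraph.Walk.support_ne_nil]
  obtain ⟨m, hm_mem, hm_max⟩ : ∃ m ∈ c.support, ∀ x ∈ c.support, x ≤ m :=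
    ⟨c.support.toFinset.max' hne, by simpa using c.support.toFinset.max'_mem hne,
      fun x hx => Finset.le_max' _ x (by simpa using hx)⟩
  obtain ⟨p, hpc, hsupp⟩ : ∃ p : (graphOf q).Walk m m,
      p.IsCycle ∧ ∀ x ∈ p.support, x ≤ m := by
    refine ⟨c.rotate m hm_mem, hc.rotate hm_mem, ?_⟩
    intro x hx
    rw [SimpleGraph.Walk.support_eq_cons] at hx
    rcases List.mem_cons.mp hx with h | h
    · exact le_of_eq (by simpa using h)
    · exact hm_max x (List.mem_of_mem_tail
        (((SimpleGraph.Walk.support_rotate c m hm_mem).mem_iff).mp (by simpa using h)))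
  obtain ⟨L, hLdef⟩ : ∃ L, p.length = L := ⟨_, rfl⟩
  have hL : 3 ≤ L := hLdef ▸ hpc.three_le_length
  have hadj_a : (graphOf q).Adj m (p.getVert 1) := by
    have h3 := p.adj_getVert_succ (i := 0) (by omega)
    rwa [SimpleGraph.Walk.getVert_zero] at h3
  have hgl : p.getVert L = m := by rw [← hLdef]; exact p.getVert_length
  have hadj_b : (graphOf q).Adj (p.getVert (L - 1)) m := by
    have h3 := p.adj_getVert_succ (i := L - 1) (by omega)
    rwa [show L - 1 + 1 = L from by omega, hgl] at h3
  have ha_mem : p.getVert 1 ∈ p.support :=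
    SimpleGraph.Walk.mem_support_iff_exists_getVert.mpr ⟨1, rfl, by omega⟩
  have hb_mem : p.getVert (L - 1) ∈ p.support :=
    SimpleGraph.Walk.mem_support_iff_exists_getVert.mpr ⟨L - 1, rfl, by omega⟩
  have ha_lt : p.getVert 1 < m := lt_of_le_of_ne (hsupp _ ha_mem) hadj_a.ne'
  have hb_lt : p.getVert (L - 1) < m := lt_of_le_of_ne (hsupp _ hb_mem) hadj_b.ne
  have hm0 : (m : ℕ) ≠ 0 := by
    have h4 : ((p.getVert 1) : ℕ) < (m : ℕ) := ha_lt
    omega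
  obtain ⟨pa, hpa, huniq⟩ := exuniq hq m hm0
  have hab : p.getVert 1 = p.getVert (L - 1) :=
    (huniq _ ⟨ha_lt, hadj_a.symm⟩).trans (huniq _ ⟨hb_lt, hadj_b⟩).symm
  have hnodup : p.support.tail.Nodup := hpc.2
  have hlen : p.support.length = L + 1 := by rw [SimpleGraph.Walk.length_support, hLdef]
  have htail_len : p.support.tail.length = L := by rw [List.length_tail, hlen]; omega
  have e1 : p.support.tail[0]'(by omega) = p.getVert 1 := by
    rw [List.getElem_tail, support_getElem p 1 (by omega)]
  have e2 : p.support.tail[L - 2]'(by omega) = p.getVert (L - 1) := by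
    rw [List.getElem_tail, support_getElem p (L - 2 + 1) (by omega),
      show L - 2 + 1 = L - 1 from by omega]
  have : (0 : ℕ) = L - 2 := by
    have h9 : p.support.tail[0]'(by omega) = p.support.tail[L - 2]'(by omega) := by
      rw [e1, e2, hab]
    exact (List.Nodup.getElem_inj_iff hnodup).mp h9
  omega

lemma graphOf_isNCO {q : Fin n → ℕ} (hq : NC n q) : IsNCOTree (graphOf q) :=
  ⟨⟨⟨connected hq, acyclic hq⟩, noncross hq⟩, fun v hv => exuniq hq v hv⟩

def Phi (n : ℕ) : PSeq n → {G : SimpleGraph (Fin (n + 1)) // IsNCOTree G} :=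
  fun q => ⟨graphOf q.1, graphOf_isNCO q.2⟩

lemma Phi_bij (n : ℕ) : Function.Bijective (Phi n) := by
  constructor
  · rintro ⟨q, hq⟩ ⟨q', hq'⟩ h
    have hG : graphOf q = graphOf q' := congrArg Subtype.val h
    apply Subtype.ext; funext i
    have hv : ((⟨(i : ℕ) + 1, by have := i.isLt; omega⟩ : Fin (n + 1)) : ℕ) ≠ 0 := by simp
    have h1 := par_adj hq ⟨(i : ℕ) + 1, by have := i.isLt; omega⟩ hv
    have h1' := par_lt hq ⟨(i : ℕ) + 1, by have := i.isLt; omega⟩ hv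
    rw [hG] at h1
    obtain ⟨pa, hpa, huniq⟩ := exuniq hq' ⟨(i : ℕ) + 1, by have := i.isLt; omega⟩ hv
    have hpa2 := huniq _ ⟨par_lt hq' _ hv, par_adj hq' _ hv⟩
    have h2 := (huniq _ ⟨h1', h1⟩).trans hpa2.symm
    have h3 : q ⟨i, i.isLt⟩ = q' ⟨i, i.isLt⟩ := by
      have := congrArg Fin.val h2
      simpa [par] using this
    simpa using h3
  · rintro ⟨G, hG⟩
    classical
    -- the parent function of G
    have hpar : ∀ i : Fin n, ∃ a : Fin (n + 1),
        a < ⟨(i : ℕ) + 1, by have := i.isLt; omega⟩ ∧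
        G.Adj a ⟨(i : ℕ) + 1, by have := i.isLt; omega⟩ :=
      fun i => (hG.2 ⟨(i : ℕ) + 1, by have := i.isLt; omega⟩ (by simp)).exists
    choose pf hpf1 hpf2 using hpar
    set q : Fin n → ℕ := fun i => (pf i : ℕ) with hqdef
    have hq1 : ∀ i : Fin n, q i ≤ (i : ℕ) := by
      intro i
      have := hpf1 i
      simp only [Fin.lt_def] at this
      simpa [hqdef] using Nat.lt_succ_iff.mp this
    have hq : NC n q := by
      refine ⟨hq1, ?_⟩
      intro i j hij
      by_contra hcon
      push_neg at hcon
      obtain ⟨h1, h2⟩ := hcon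
      -- crossing: pf i < pf j < i+1 < j+1
      refine hG.1.2 (pf i) ⟨(i : ℕ) + 1, by have := i.isLt; omega⟩
        (pf j) ⟨(j : ℕ) + 1, by have := j.isLt; omega⟩ (hpf2 i) (hpf2 j) ?_
      refine ⟨Fin.lt_def.mpr ?_, Fin.lt_def.mpr ?_, Fin.lt_def.mpr ?_⟩
      · exact h1
      · show (pf j : ℕ) < (i : ℕ) + 1
        have hj' : q j = (pf j : ℕ) := rfl
        omega
      · show (i : ℕ) + 1 < (j : ℕ) + 1
        have : (i : ℕ) < (j : ℕ) := hij
        omega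
    refine ⟨⟨q, hq⟩, ?_⟩
    apply Subtype.ext
    show graphOf q = G
    have key : ∀ a b : Fin (n + 1), a < b → ((graphOf q).Adj a b ↔ G.Adj a b) := by
      intro a b hab
      rw [adj_iff hq hab]
      constructor
      · rintro ⟨i, h1, h2⟩
        have hb : b = ⟨(i : ℕ) + 1, by have := i.isLt; omega⟩ := Fin.ext h2
        have ha : a = pf i := Fin.ext h1
        rw [ha, hb]; exact hpf2 i
      · intro hGadj
        have hb0 : (b : ℕ) ≠ 0 := by
          have : (a : ℕ) < (b : ℕ) := hab
          omega
        set i : Fin n := ⟨(b : ℕ) - 1, by have := b.isLt; omega⟩ with hidef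
        have hbi : b = ⟨(i : ℕ) + 1, by have := i.isLt; omega⟩ := Fin.ext (by simp [hidef]; omega)
        obtain ⟨pa, hpa, huniq⟩ := hG.2 b hb0
        have h1 := huniq a ⟨hab, hGadj⟩
        have h2 := huniq (pf i) ⟨by rw [hbi]; exact hpf1 i, by rw [hbi]; exact hpf2 i⟩
        refine ⟨i, ?_, by simp [hidef]; omega⟩
        rw [h1.trans h2.symm]
    ext a b
    rcases lt_trichotomy a b with h | h | h
    · exact key a b h
    · subst h; simp
    · constructor
      · intro hh; exact ((key b a h).mp hh.symm).symm
      · intro hh; exact ((key b a h).mpr hh.symm).symm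

end Graph
open DyckStep

def b2s (b : Bool) : DyckStep := if b then U else D
def s2b (s : DyckStep) : Bool := s = U

lemma b2s_inj : Function.Injective b2s := by decide
lemma s2b_b2s : ∀ b, s2b (b2s b) = b := by intro b; cases b <;> rfl
lemma b2s_s2b : ∀ s, b2s (s2b s) = s := by intro s; cases s <;> rfl

lemma count_tf (l : List Bool) : l.count true + l.count false = l.length := by
  induction l with
  | nil => simp
  | cons b l ih => cases b <;> simp [List.count_cons] <;> omega

lemma count_ud (l : List DyckStep) : l.count U + l.count D = l.length := by
  induction l with
  | nil => simp
  | cons s l ih => cases s <;> simp [List.count_cons] <;> omega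

def dyckEquiv (n : ℕ) :
    {p : List Bool // IsDyckWord p ∧ p.length = 2 * n} ≃
      {w : DyckWord // w.semilength = n} where
  toFun p := ⟨⟨p.1.map b2s,
      by
        rw [show U = b2s true from rfl, show D = b2s false from rfl,
          List.count_map_of_injective _ _ b2s_inj, List.count_map_of_injective _ _ b2s_inj]
        exact p.2.1.2,
      by
        intro i
        rw [← List.map_take, show U = b2s true from rfl, show D = b2s false from rfl,
          List.count_map_of_injective _ _ b2s_inj, List.count_map_of_injective _ _ b2s_inj]
        exact p.2.1.1 i⟩,
      by
        show (p.1.map b2s).count U = n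
        rw [show U = b2s true from rfl, List.count_map_of_injective _ _ b2s_inj]
        have h1 := count_tf p.1
        have h2 := p.2.1.2
        have h3 := p.2.2
        omega⟩
  invFun w := ⟨w.1.toList.map s2b,
      by
        constructor
        · constructor
          · intro k
            rw [← List.map_take, show (true : Bool) = s2b U from rfl,
              show (false : Bool) = s2b D from rfl,
              List.count_map_of_injective _ _ (fun a b h => by
                rw [← b2s_s2b a, ← b2s_s2b b, h]),
              List.count_map_of_injective _ _ (fun a b h => by
                rw [← b2s_s2b a, ← b2s_s2b b, h])]
            exact w.1.count_D_le_count_U k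
          · rw [show (true : Bool) = s2b U from rfl, show (false : Bool) = s2b D from rfl,
              List.count_map_of_injective _ _ (fun a b h => by
                rw [← b2s_s2b a, ← b2s_s2b b, h]),
              List.count_map_of_injective _ _ (fun a b h => by
                rw [← b2s_s2b a, ← b2s_s2b b, h])]
            exact w.1.count_U_eq_count_D
        · rw [List.length_map, ← w.1.two_mul_semilength_eq_length, w.2]⟩
  left_inv p := by
    apply Subtype.ext
    show (p.1.map b2s).map s2b = p.1
    rw [List.map_map, show s2b ∘ b2s = id from funext s2b_b2s, List.map_id]
  right_inv w := by
    apply Subtype.ext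
    apply DyckWord.ext
    show ((w.1.toList.map s2b).map b2s) = w.1.toList
    rw [List.map_map, show b2s ∘ s2b = id from funext b2s_s2b, List.map_id]

end NCOProof

/-- Dyck paths of length `2n` are in bijection with non-crossing
out-trees on `n+1` vertices; consequently the number of NCO-trees on `n+1`
vertices is the Catalan number `Cₙ`. -/
theorem dyck_equiv_nco_tree (n : ℕ) :
    Nonempty ({p : List Bool // IsDyckWord p ∧ p.length = 2 * n} ≃
      {G : SimpleGraph (Fin (n + 1)) // IsNCOTree G}) ∧
    Nat.card {G : SimpleGraph (Fin (n + 1)) // IsNCOTree G} = catalan n := by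
  have e1 := NCOProof.dyckEquiv n
  have e2 := Equiv.ofBijective _ (NCOProof.Phi_bij n)
  have hd : Nat.card {p : List Bool // IsDyckWord p ∧ p.length = 2 * n} = catalan n := by
    rw [Nat.card_congr e1, Nat.card_eq_fintype_card,
      DyckWord.card_dyckWord_semilength_eq_catalan]
  have hn : Nat.card {G : SimpleGraph (Fin (n + 1)) // IsNCOTree G} = catalan n := by
    rw [← Nat.card_congr e2, NCOProof.card_pseq]
  have f1 : Finite {p : List Bool // IsDyckWord p ∧ p.length = 2 * n} :=
    Finite.of_equiv _ e1.symm
  have f2 : Finite {G : SimpleGraph (Fin (n + 1)) // IsNCOTree G} :=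
    Finite.of_equiv _ e2
  exact ⟨Finite.card_eq.mp (hd.trans hn.symm), hn⟩
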